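/- arXiv:2408.11606 — 2 statements merged into one kernel-verified Lean document; each statement's English description precedes it below -/
import Mathlib

section
/- Grover rotation lemma: let N ≥ 1, let S ⊆ Fin N be a set of marked indices with 0 < M = |S| < N. On EuclideanSpace ℂ (Fin N), define the oracle O as the diagonal map (O v)(x) = (−1)^{(if x ∈ S then 1 else 0)} · v(x), the uniform superposition ψ with ψ(x) = 1/√N for all x, the diffuser D = 2·(projection onto ψ scaled, i.e. Dv = 2⟨ψ, v⟩ψ − v), and the Grover iterate G = D ∘ O. Let θ = Real.arcsin (√(M/N)), let u_S be the vector with u_S(x) = 1/√M for x ∈ S and 0 otherwise, and u_{S^c} the vector with u_{S^c}(x) = 1/√(N−M) for x ∉ S and 0 otherwise. Then for every natural number k, G^k ψ = Real.sin((2k+1)·θ) • u_S + Real.cos((2k+1)·θ) • u_{S^c}. -/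
/-- Grover rotation lemma: starting from the uniform superposition `ψ`, after `k`
iterations of the Grover iterate `G = D ∘ O` the state is
`sin((2k+1)θ) • u_S + cos((2k+1)θ) • u_{Sᶜ}`, where `θ = arcsin √(M/N)`,
`u_S` is the uniform superposition over the `M` marked indices and `u_{Sᶜ}` the
uniform superposition over the `N − M` unmarked indices. -/
theorem grover_rotation (N : ℕ) (hN : 1 ≤ N) (S : Finset (Fin N)) (M : ℕ)
    (hM : M = S.card) (hM0 : 0 < M) (hMN : M < N)
    (ψ uS uSc : EuclideanSpace ℂ (Fin N))
    (hψ : ∀ x, ψ x = ((Real.sqrt N)⁻¹ : ℝ))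
    (huS : ∀ x, uS x = if x ∈ S then (((Real.sqrt M)⁻¹ : ℝ) : ℂ) else 0)
    (huSc : ∀ x, uSc x = if x ∈ S then 0 else (((Real.sqrt (N - M))⁻¹ : ℝ) : ℂ))
    (O D : EuclideanSpace ℂ (Fin N) →ₗ[ℂ] EuclideanSpace ℂ (Fin N))
    (hO : ∀ v x, O v x = (-1 : ℂ) ^ (if x ∈ S then 1 else 0) * v x)
    (hD : ∀ v, D v = (2 : ℂ) • (inner ℂ ψ v : ℂ) • ψ - v)
    (θ : ℝ) (hθ : θ = Real.arcsin (Real.sqrt ((M : ℝ) / N))) :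
    ∀ k : ℕ, ((D ∘ₗ O) ^ k) ψ =
      ((Real.sin ((2 * k + 1) * θ) : ℝ) : ℂ) • uS +
        ((Real.cos ((2 * k + 1) * θ) : ℝ) : ℂ) • uSc := by
  have hN0 : (0:ℝ) < N := by positivity
  have hM0' : (0:ℝ) < M := by exact_mod_cast hM0
  have hNM0 : (0:ℝ) < (N:ℝ) - M := by
    have : (M:ℝ) < N := by exact_mod_cast hMN
    linarith
  have hsN : (0:ℝ) < Real.sqrt N := Real.sqrt_pos.mpr hN0
  have hsM : (0:ℝ) < Real.sqrt M := Real.sqrt_pos.mpr hM0'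
  have hsNM : (0:ℝ) < Real.sqrt ((N:ℝ) - M) := Real.sqrt_pos.mpr hNM0
  have hMM : (M:ℝ) = Real.sqrt M * Real.sqrt M := (Real.mul_self_sqrt hM0'.le).symm
  have hNMM : (N:ℝ) - M = Real.sqrt ((N:ℝ) - M) * Real.sqrt ((N:ℝ) - M) :=
    (Real.mul_self_sqrt hNM0.le).symm
  -- sin and cos of θ
  have hsin : Real.sin θ = Real.sqrt M / Real.sqrt N := by
    rw [hθ, Real.sin_arcsin (le_trans (by norm_num) (Real.sqrt_nonneg _))
      (Real.sqrt_le_one.mpr (by rw [div_le_one hN0]; exact_mod_cast hMN.le)),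
      Real.sqrt_div hM0'.le]
  have hcos : Real.cos θ = Real.sqrt ((N:ℝ) - M) / Real.sqrt N := by
    rw [hθ, Real.cos_arcsin, Real.sq_sqrt (by positivity)]
    have h1 : 1 - (M:ℝ)/N = ((N:ℝ) - M)/N := by field_simp
    rw [h1, Real.sqrt_div hNM0.le]
  -- O on uS and uSc
  have hOuS : O uS = -uS := by
    ext x
    rw [hO]
    show _ = -(uS x)
    rw [huS]
    split_ifs <;> simp
  have hOuSc : O uSc = uSc := by
    ext x
    rw [hO, huSc]
    split_ifs <;> simp
  -- inner products
  have hinS : (inner ℂ ψ uS : ℂ) = ((Real.sin θ : ℝ) : ℂ) := by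
    rw [PiLp.inner_apply]
    simp only [hψ, huS, RCLike.inner_apply, Complex.conj_ofReal, mul_ite, mul_zero, ite_mul, zero_mul]
    rw [Finset.sum_ite_mem, Finset.univ_inter, Finset.sum_const, ← hM, hsin,
      nsmul_eq_mul]
    norm_cast
    field_simp
    linear_combination hMM
  have hinSc : (inner ℂ ψ uSc : ℂ) = ((Real.cos θ : ℝ) : ℂ) := by
    rw [PiLp.inner_apply]
    simp only [hψ, huSc, RCLike.inner_apply, Complex.conj_ofReal, mul_ite, mul_zero, ite_mul, zero_mul]
    rw [Finset.sum_ite, Finset.sum_const_zero, zero_add, Finset.sum_const]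
    have hcard : (Finset.univ.filter (fun x => ¬ x ∈ S)).card = N - M := by
      rw [hM, Finset.filter_not, Finset.filter_mem_eq_inter, Finset.univ_inter,
        Finset.card_sdiff_of_subset (Finset.subset_univ S)]
      simp
    rw [hcard, hcos, nsmul_eq_mul]
    push_cast [Nat.cast_sub hMN.le]
    have ne1 : ((Real.sqrt ((N:ℝ) - M) : ℝ) : ℂ) ≠ 0 := by exact_mod_cast hsNM.ne'
    have ne2 : ((Real.sqrt (N:ℝ) : ℝ) : ℂ) ≠ 0 := by exact_mod_cast hsN.ne'
    have hsq : ((Real.sqrt ((N:ℝ) - M) : ℝ) : ℂ) ^ 2 = (N:ℂ) - M := by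
      rw [← Complex.ofReal_pow, Real.sq_sqrt hNM0.le]; push_cast; ring
    field_simp
    have hNMMc : ((N:ℂ) - M) = ((Real.sqrt ((N:ℝ) - M) : ℝ) : ℂ) * ((Real.sqrt ((N:ℝ) - M) : ℝ) : ℂ) := by
      rw [← Complex.ofReal_mul, ← hNMM]; push_cast; ring
    linear_combination hNMMc
  -- ψ as combination
  have hψeq : ψ = ((Real.sin θ : ℝ) : ℂ) • uS + ((Real.cos θ : ℝ) : ℂ) • uSc := by
    ext x
    show ψ x = ((Real.sin θ : ℝ) : ℂ) * uS x + ((Real.cos θ : ℝ) : ℂ) * uSc x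
    rw [hψ, huS, huSc, hsin, hcos]
    split_ifs with h
    · rw [mul_zero, add_zero, ← Complex.ofReal_mul]
      congr 1
      rw [div_mul_eq_mul_div, mul_inv_cancel₀ hsM.ne', one_div]
    · rw [mul_zero, zero_add, ← Complex.ofReal_mul]
      congr 1
      rw [div_mul_eq_mul_div, mul_inv_cancel₀ hsNM.ne', one_div]
  -- the rotation step
  have hstep : ∀ t : ℝ, (D ∘ₗ O) (((Real.sin t : ℝ) : ℂ) • uS + ((Real.cos t : ℝ) : ℂ) • uSc)
      = ((Real.sin (t + 2*θ) : ℝ) : ℂ) • uS + ((Real.cos (t + 2*θ) : ℝ) : ℂ) • uSc := by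
    intro t
    rw [LinearMap.comp_apply, map_add, map_smul, map_smul, hOuS, hOuSc, hD,
      inner_add_right, inner_smul_right, inner_smul_right, inner_neg_right,
      hinS, hinSc, hψeq]
    have e1 : Real.sin (t + 2*θ) = Real.sin t * (1 - 2 * Real.sin θ ^ 2)
        + Real.cos t * (2 * Real.sin θ * Real.cos θ) := by
      rw [Real.sin_add, Real.cos_two_mul', Real.sin_two_mul]
      linear_combination Real.sin t * Real.sin_sq_add_cos_sq θ
    have e2 : Real.cos (t + 2*θ) = Real.cos t * (2 * Real.cos θ ^ 2 - 1)
        - Real.sin t * (2 * Real.sin θ * Real.cos θ) := by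
      rw [Real.cos_add, Real.cos_two_mul, Real.sin_two_mul]
    rw [e1, e2]
    match_scalars <;> push_cast <;> ring
  -- induction
  intro k
  induction k with
  | zero =>
    simp only [pow_zero, Module.End.one_apply, Nat.cast_zero]
    rw [hψeq]
    norm_num
  | succ k ih =>
    rw [pow_succ', Module.End.mul_apply, ih, hstep]
    have h1 : (2 * (k:ℝ) + 1) * θ + 2 * θ = (2 * ((k+1 : ℕ):ℝ) + 1) * θ := by
      push_cast; ring
    rw [h1]
end

section
/- Grover success probability formula: under the setup of the Grover rotation lemma (N ≥ 1, marked set S ⊆ Fin N with 0 < M = |S| < N, oracle O flipping signs on S, diffuser D = 2|ψ⟩⟨ψ| − I about the uniform superposition ψ, G = D ∘ O, θ = Real.arcsin (√(M/N))), for every natural number k the total probability of measuring a marked index after k iterations satisfies ∑_{x ∈ S} ‖(G^k ψ)(x)‖² = (Real.sin ((2k+1)·θ))², and moreover this probability is shared equally: for every x ∈ S, ‖(G^k ψ)(x)‖² = (Real.sin ((2k+1)·θ))² / M. -/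
open scoped ComplexConjugate

lemma grover_step (sm sd sn φ θ : ℝ) (hsm : sm ≠ 0) (hsd : sd ≠ 0) (hsn : sn ≠ 0)
    (hn : sn ^ 2 = sm ^ 2 + sd ^ 2)
    (hs : Real.sin θ = sm / sn) (hc : Real.cos θ = sd / sn) :
    (2 * ((sd ^ 2 * (Real.cos φ / sd) - sm ^ 2 * (Real.sin φ / sm)) / sn ^ 2) + Real.sin φ / sm
        = Real.sin (φ + 2 * θ) / sm) ∧
    (2 * ((sd ^ 2 * (Real.cos φ / sd) - sm ^ 2 * (Real.sin φ / sm)) / sn ^ 2) - Real.cos φ / sd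
        = Real.cos (φ + 2 * θ) / sd) := by
  constructor
  · rw [Real.sin_add, Real.sin_two_mul, Real.cos_two_mul, hs, hc]
    field_simp
    ring_nf
    linear_combination (2 * Real.sin φ) * hn
  · rw [Real.cos_add, Real.sin_two_mul, Real.cos_two_mul, hs, hc]
    field_simp
    ring_nf

lemma grover_key (N : ℕ) (hN : 1 ≤ N) (S : Finset (Fin N)) (M : ℕ)
    (hM : M = S.card) (hM0 : 0 < M) (hMN : M < N)
    (ψ : EuclideanSpace ℂ (Fin N))
    (hψ : ∀ x, ψ x = ((Real.sqrt N)⁻¹ : ℝ))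
    (O D : EuclideanSpace ℂ (Fin N) →ₗ[ℂ] EuclideanSpace ℂ (Fin N))
    (hO : ∀ v x, O v x = (-1 : ℂ) ^ (if x ∈ S then 1 else 0) * v x)
    (hD : ∀ v, D v = (2 : ℂ) • (inner ℂ ψ v : ℂ) • ψ - v)
    (θ : ℝ) (hθ : θ = Real.arcsin (Real.sqrt ((M : ℝ) / N))) :
    ∀ k : ℕ, ∀ x : Fin N,
      (((D ∘ₗ O) ^ k) ψ) x =
        if x ∈ S then ((Real.sin ((2 * k + 1) * θ) / Real.sqrt M : ℝ) : ℂ)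
        else ((Real.cos ((2 * k + 1) * θ) / Real.sqrt ((N : ℝ) - M) : ℝ) : ℂ) := by
  have hNpos : (0 : ℝ) < N := by positivity
  have hmpos : (0 : ℝ) < M := by exact_mod_cast hM0
  have hdpos : (0 : ℝ) < (N : ℝ) - M := by
    have : (M : ℝ) < N := by exact_mod_cast hMN
    linarith
  set sm := Real.sqrt M with hsm_def
  set sd := Real.sqrt ((N : ℝ) - M) with hsd_def
  set sn := Real.sqrt N with hsn_def
  have hsm : (0 : ℝ) < sm := Real.sqrt_pos.mpr hmpos
  have hsd : (0 : ℝ) < sd := Real.sqrt_pos.mpr hdpos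
  have hsn : (0 : ℝ) < sn := Real.sqrt_pos.mpr hNpos
  have hm2 : sm ^ 2 = (M : ℝ) := Real.sq_sqrt hmpos.le
  have hd2 : sd ^ 2 = (N : ℝ) - M := Real.sq_sqrt hdpos.le
  have hn2 : sn ^ 2 = (N : ℝ) := Real.sq_sqrt hNpos.le
  have hn : sn ^ 2 = sm ^ 2 + sd ^ 2 := by rw [hm2, hd2, hn2]; ring
  have hsqrt_div : Real.sqrt ((M : ℝ) / N) = sm / sn := Real.sqrt_div hmpos.le N
  have hsin : Real.sin θ = sm / sn := by
    rw [hθ, Real.sin_arcsin (by linarith [Real.sqrt_nonneg ((M : ℝ) / N)])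
      (by rw [hsqrt_div, div_le_one hsn]
          exact Real.sqrt_le_sqrt (by exact_mod_cast hMN.le))]
    exact hsqrt_div
  have hcos : Real.cos θ = sd / sn := by
    rw [hθ, Real.cos_arcsin, Real.sq_sqrt (by positivity : (0:ℝ) ≤ (M : ℝ)/N)]
    rw [show (1 : ℝ) - (M : ℝ)/N = ((N : ℝ) - M)/N by field_simp]
    exact Real.sqrt_div hdpos.le N
  intro k
  induction k with
  | zero =>
    intro x
    rw [pow_zero, Module.End.one_apply, hψ]
    have h1 : (2 * ((0 : ℕ) : ℝ) + 1) * θ = θ := by push_cast; ring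
    rw [h1]
    split
    · have h2 : (sn⁻¹ : ℝ) = Real.sin θ / sm := by
        rw [hsin]; field_simp
      exact congrArg Complex.ofReal h2
    · have h2 : (sn⁻¹ : ℝ) = Real.cos θ / sd := by
        rw [hcos]; field_simp
      exact congrArg Complex.ofReal h2
  | succ k ih =>
    set v := ((D ∘ₗ O) ^ k) ψ with hv
    set φ := (2 * (k : ℝ) + 1) * θ with hφ
    set a := Real.sin φ / sm with ha
    set b := Real.cos φ / sd with hb
    have hOv : ∀ y, O v y = if y ∈ S then ((-a : ℝ) : ℂ) else ((b : ℝ) : ℂ) := by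
      intro y
      rw [hO, ih y]
      split
      · push_cast; ring
      · push_cast; ring
    have hOv' : (O v : Fin N → ℂ) = fun y => if y ∈ S then ((-a : ℝ) : ℂ) else ((b : ℝ) : ℂ) :=
      funext hOv
    have hcard : (Finset.univ.filter (fun y : Fin N => y ∉ S)).card = N - M := by
      have : (Finset.univ.filter (fun y : Fin N => y ∉ S)) = Sᶜ := by
        ext y; simp
      rw [this, Finset.card_compl, Fintype.card_fin, hM]
    have hcS : (Finset.univ.filter (fun y : Fin N => y ∈ S)).card = M := by
      rw [Finset.filter_mem_eq_inter, Finset.univ_inter, hM]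
    have hc : (inner ℂ ψ (O v) : ℂ) =
        ((sn⁻¹ * ((M : ℝ) * (-a) + ((N : ℝ) - M) * b) : ℝ) : ℂ) := by
      rw [PiLp.inner_apply]
      simp only [RCLike.inner_apply, hψ, hOv, Complex.conj_ofReal]
      rw [← Finset.sum_mul, Finset.sum_ite, Finset.sum_const, Finset.sum_const,
        hcS, hcard, nsmul_eq_mul, nsmul_eq_mul, Nat.cast_sub hMN.le]
      push_cast
      ring
    have happ : (((D ∘ₗ O) ^ (k + 1)) ψ) = D (O v) := by
      rw [pow_succ', Module.End.mul_apply, LinearMap.comp_apply, hv]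
    intro x
    rw [happ, hD]
    have hφ' : (2 * ((k : ℝ) + 1) + 1) * θ = φ + 2 * θ := by rw [hφ]; ring
    have hsub : ((2 : ℂ) • (inner ℂ ψ (O v) : ℂ) • ψ - O v) x
        = 2 * ((inner ℂ ψ (O v) : ℂ) * ψ x) - O v x := by
      simp [PiLp.sub_apply, PiLp.smul_apply, smul_eq_mul, mul_assoc]
    rw [hsub, hc, hψ, hOv x]
    have hstep := grover_step sm sd sn φ θ hsm.ne' hsd.ne' hsn.ne' hn hsin hcos
    have hre1 : 2 * (sn⁻¹ * ((M : ℝ) * -a + ((N : ℝ) - M) * b) * sn⁻¹) - -a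
        = Real.sin (φ + 2 * θ) / sm := by
      rw [ha, hb, ← hd2, ← hm2]
      linear_combination hstep.1
    have hre2 : 2 * (sn⁻¹ * ((M : ℝ) * -a + ((N : ℝ) - M) * b) * sn⁻¹) - b
        = Real.cos (φ + 2 * θ) / sd := by
      rw [ha, hb, ← hd2, ← hm2]
      linear_combination hstep.2
    by_cases hx : x ∈ S
    · simp only [hx, if_true]
      have h3 : Real.sin ((2 * ((k + 1 : ℕ) : ℝ) + 1) * θ) / sm
          = Real.sin (φ + 2 * θ) / sm := by
        congr 1; congr 1; push_cast; rw [hφ]; ring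
      rw [h3, ← hre1]
      push_cast
      ring
    · simp only [hx, if_false]
      have h3 : Real.cos ((2 * ((k + 1 : ℕ) : ℝ) + 1) * θ) / sd
          = Real.cos (φ + 2 * θ) / sd := by
        congr 1; congr 1; push_cast; rw [hφ]; ring
      rw [h3, ← hre2]
      push_cast
      ring

/-- Grover success probability: under the Grover setup, after `k` iterations of
`G = D ∘ O` the total probability of measuring a marked index is `sin²((2k+1)θ)`,
and each marked index carries probability `sin²((2k+1)θ) / M`. -/
theorem grover_success_probability (N : ℕ) (hN : 1 ≤ N) (S : Finset (Fin N)) (M : ℕ)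
    (hM : M = S.card) (hM0 : 0 < M) (hMN : M < N)
    (ψ : EuclideanSpace ℂ (Fin N))
    (hψ : ∀ x, ψ x = ((Real.sqrt N)⁻¹ : ℝ))
    (O D : EuclideanSpace ℂ (Fin N) →ₗ[ℂ] EuclideanSpace ℂ (Fin N))
    (hO : ∀ v x, O v x = (-1 : ℂ) ^ (if x ∈ S then 1 else 0) * v x)
    (hD : ∀ v, D v = (2 : ℂ) • (inner ℂ ψ v : ℂ) • ψ - v)
    (θ : ℝ) (hθ : θ = Real.arcsin (Real.sqrt ((M : ℝ) / N))) :
    ∀ k : ℕ,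
      (∑ x ∈ S, ‖(((D ∘ₗ O) ^ k) ψ) x‖ ^ 2 = Real.sin ((2 * k + 1) * θ) ^ 2) ∧
      ∀ x ∈ S, ‖(((D ∘ₗ O) ^ k) ψ) x‖ ^ 2 = Real.sin ((2 * k + 1) * θ) ^ 2 / M := by
  intro k
  have key := grover_key N hN S M hM hM0 hMN ψ hψ O D hO hD θ hθ k
  have hmpos : (0 : ℝ) < M := by exact_mod_cast hM0
  have hm2 : Real.sqrt M ^ 2 = (M : ℝ) := Real.sq_sqrt hmpos.le
  have hterm : ∀ x ∈ S, ‖(((D ∘ₗ O) ^ k) ψ) x‖ ^ 2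
      = Real.sin ((2 * k + 1) * θ) ^ 2 / M := by
    intro x hx
    rw [key x, if_pos hx, Complex.norm_real, Real.norm_eq_abs, sq_abs, div_pow, hm2]
  refine ⟨?_, hterm⟩
  rw [Finset.sum_congr rfl hterm, Finset.sum_const, ← hM, nsmul_eq_mul]
  field_simp
end
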